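/- Let ξ be any graph invariant which satisfies a zero-one law with respect to G(n, 1/2). Then for every δ > 0 there exists a SumGNN⁺ with random node features M (i.e. a choice of number of layers T, dimensions, weight matrices, biases, and classifier, whose non-linearity is the linearized sigmoid and whose initial node features are drawn i.i.d. with d independent U[0,1] coordinates per node) such that M uniformly δ-approximates ξ: for every n ∈ ℕ, when G ~ G(n, 1/2) and the random node features are sampled, Pr(M(G) = ξ(G)) ≥ 1 − δ. -/

import Mathlib

open MeasureTheory ProbabilityTheory Filter Topology
open scoped ENNReal

/-- Bernoulli measure on `Bool` with success probability `r` (for `r ∈ [0,1]`). -/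
noncomputable def bern (r : ℝ) : Measure Bool :=
  (PMF.bernoulli (min (Real.toNNReal r) 1) (min_le_right _ _)).toMeasure

instance (r : ℝ) : IsProbabilityMeasure (bern r) := by
  unfold bern; infer_instance

/-- Index type for the potential edges of a graph on `Fin n`. -/
abbrev EdgeIdx (n : ℕ) := {p : Fin n × Fin n // p.1 < p.2}

/-- The Erdős–Rényi measure on edge-indicator functions. -/
noncomputable def erMeasure (n : ℕ) (r : ℝ) : Measure (EdgeIdx n → Bool) :=
  Measure.pi fun _ => bern r

instance (n : ℕ) (r : ℝ) : IsProbabilityMeasure (erMeasure n r) := by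
  unfold erMeasure; infer_instance

/-- Sample space for a random graph with node features. -/
abbrev GOmega (n d : ℕ) := (EdgeIdx n → Bool) × (Fin n → (Fin d → ℝ))

/-- Joint distribution of an ER graph and iid node features drawn from `D`. -/
noncomputable def graphMeasure (n : ℕ) (r : ℝ) {d : ℕ} (D : Measure (Fin d → ℝ))
    [IsProbabilityMeasure D] : Measure (GOmega n d) :=
  (erMeasure n r).prod (Measure.pi fun _ : Fin n => D)

/-- Adjacency relation determined by edge indicators. -/
def adjOf {n : ℕ} (e : EdgeIdx n → Bool) (u v : Fin n) : Bool :=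
  if h : u < v then e ⟨(u, v), h⟩ else if h' : v < u then e ⟨(v, u), h'⟩ else false

/-- (Open) neighbourhood of a node. -/
def nbhd {n : ℕ} (A : Fin n → Fin n → Bool) (v : Fin n) : Finset (Fin n) :=
  Finset.univ.filter fun u => A u v = true

/-- Degree of a node. -/
def deg {n : ℕ} (A : Fin n → Fin n → Bool) (v : Fin n) : ℕ := (nbhd A v).card

/-- Closed neighbourhood `N⁺(v) = N(v) ∪ {v}`. -/
def closedNbhd {n : ℕ} (A : Fin n → Fin n → Bool) (v : Fin n) : Finset (Fin n) :=
  insert v (nbhd A v)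

/-- `D` is a sub-Gaussian distribution on `ℝ^d`. -/
def SubGaussianVec {d : ℕ} (D : Measure (Fin d → ℝ)) : Prop :=
  ∃ C > 0, ∀ y : Fin d → ℝ, (∑ i, (y i) ^ 2) = 1 → ∀ t > 0,
    D {x | t ≤ |∑ i, x i * y i|} ≤ ENNReal.ofReal (2 * Real.exp (-(t ^ 2) / C ^ 2))

/-- Lipschitz continuity of a real function. -/
def RealLipschitz (σ : ℝ → ℝ) : Prop :=
  ∃ C > 0, ∀ a b : ℝ, |σ a - σ b| ≤ C * |a - b|

/-- A SumGNN⁺: a GNN with sum aggregation and global readout. -/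
structure SumGNN where
  T : ℕ
  d : ℕ → ℕ
  Ws : (t : ℕ) → Matrix (Fin (d (t + 1))) (Fin (d t)) ℝ
  Wn : (t : ℕ) → Matrix (Fin (d (t + 1))) (Fin (d t)) ℝ
  Wg : (t : ℕ) → Matrix (Fin (d (t + 1))) (Fin (d t)) ℝ
  b : (t : ℕ) → Fin (d (t + 1)) → ℝ
  σ : ℝ → ℝ

/-- Node embeddings computed by a SumGNN⁺. -/
noncomputable def SumGNN.embed (M : SumGNN) {n : ℕ} (A : Fin n → Fin n → Bool)
    (X : Fin n → Fin (M.d 0) → ℝ) : (t : ℕ) → Fin n → Fin (M.d t) → ℝ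
  | 0 => X
  | t + 1 => fun v i =>
      M.σ ((M.Ws t).mulVec (M.embed A X t v) i
          + (M.Wn t).mulVec (∑ u ∈ nbhd A v, M.embed A X t u) i
          + (M.Wg t).mulVec (∑ u : Fin n, M.embed A X t u) i
          + M.b t i)

/-- `σ` is eventually constant in both directions, with value `slo` towards `-∞`
and value `shi` towards `+∞`. -/
def EvConstBoth (σ : ℝ → ℝ) (slo shi : ℝ) : Prop :=
  ∃ xlo xhi : ℝ, (∀ y < xlo, σ y = slo) ∧ (∀ y > xhi, σ y = shi)

/-- The model `M` is synchronously saturating for edge probability `r`, feature mean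
`μ0`, and extremal non-linearity values `slo`, `shi`: condition (1) concerns the first
layer and condition (2) every later layer `1 < t ≤ T` (here the weights of the paper's
layer `t` are indexed by `t - 1`). -/
def SumGNN.SyncSaturating (M : SumGNN) (r : ℝ) (μ0 : Fin (M.d 0) → ℝ)
    (slo shi : ℝ) : Prop :=
  (∀ i : Fin (M.d 1), (r • M.Wn 0 + M.Wg 0).mulVec μ0 i ≠ 0) ∧
  (∀ t : ℕ, 1 ≤ t → t < M.T →
    ∀ z : Fin (M.d t) → ℝ, (∀ j, z j = slo ∨ z j = shi) →
      ∀ i : Fin (M.d (t + 1)), (r • M.Wn t + M.Wg t).mulVec z i ≠ 0)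

/-- Output of a SumGNN⁺ binary graph classifier with average pooling. -/
noncomputable def SumGNN.output (M : SumGNN) (c : (Fin (M.d M.T) → ℝ) → Bool) {n : ℕ}
    (A : Fin n → Fin n → Bool) (X : Fin n → Fin (M.d 0) → ℝ) : Bool :=
  c fun i => (n : ℝ)⁻¹ * ∑ v : Fin n, M.embed A X M.T v i

/-- The linearized sigmoid: `x ↦ -1` for `x < -1`, `x ↦ x` for `-1 ≤ x < 1`,
and `x ↦ 1` otherwise. -/
noncomputable def linSigmoid (x : ℝ) : ℝ :=
  if x < -1 then -1 else if x < 1 then x else 1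

/-- The uniform distribution `U[0,1]` on `ℝ`. -/
noncomputable def unif01 : Measure ℝ := volume.restrict (Set.Icc (0 : ℝ) 1)

instance : IsProbabilityMeasure unif01 :=
  ⟨by rw [unif01, Measure.restrict_apply_univ]; simp [Real.volume_Icc]⟩

/-- Node features with `d` iid `U[0,1]` coordinates. -/
noncomputable def unifFeat (d : ℕ) : Measure (Fin d → ℝ) := Measure.pi fun _ => unif01

instance (d : ℕ) : IsProbabilityMeasure (unifFeat d) := by
  unfold unifFeat; infer_instance

/-- A graph invariant: a Boolean function of (adjacency matrices of) finite simple
graphs which is invariant under isomorphism, i.e. under permutation of the nodes. -/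
def IsGraphInvariant (ξ : (n : ℕ) → (Fin n → Fin n → Bool) → Bool) : Prop :=
  ∀ (n : ℕ) (π : Equiv.Perm (Fin n)) (A : Fin n → Fin n → Bool),
    (∀ u v, A u v = A v u) → (∀ v, A v v = false) →
    ξ n (fun u v => A (π u) (π v)) = ξ n A


/-! ### Auxiliary construction -/

section AuxGNN

open Finset

/-- basic linSigmoid facts -/
lemma linSigmoid_of_ge {x : ℝ} (h : 1 ≤ x) : linSigmoid x = 1 := by
  unfold linSigmoid
  rw [if_neg (by linarith), if_neg (by linarith)]

lemma linSigmoid_of_le {x : ℝ} (h : x ≤ -1) : linSigmoid x = -1 := by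
  unfold linSigmoid
  rcases lt_or_eq_of_le h with h' | h'
  · rw [if_pos h']
  · rw [if_neg (by linarith), if_pos (by linarith)]; exact h'

lemma linSigmoid_of_mem {x : ℝ} (h1 : -1 ≤ x) (h2 : x < 1) : linSigmoid x = x := by
  unfold linSigmoid
  rw [if_neg (by linarith), if_pos h2]

lemma linSigmoid_zero : linSigmoid 0 = 0 := linSigmoid_of_mem (by norm_num) (by norm_num)
lemma linSigmoid_one : linSigmoid 1 = 1 := linSigmoid_of_ge le_rfl
lemma linSigmoid_two : linSigmoid 2 = 1 := linSigmoid_of_ge (by norm_num)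
lemma linSigmoid_neg_one : linSigmoid (-1) = -1 := linSigmoid_of_mem le_rfl (by norm_num)

/-- standard basis row -/
def ee {m : ℕ} (a : Fin m) : Fin m → ℝ := fun l => if l = a then 1 else 0

lemma sum_ee {m : ℕ} (a : Fin m) (z : Fin m → ℝ) : ∑ l, ee a l * z l = z a := by
  simp [ee, ite_mul, Finset.sum_ite_eq']

lemma dot_sum {m : ℕ} {γ : Type*} (f : Fin m → ℝ) (S : Finset γ) (z : γ → Fin m → ℝ) :
    ∑ l, f l * (∑ u ∈ S, z u) l = ∑ u ∈ S, ∑ l, f l * z u l := by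
  rw [Finset.sum_comm]
  congr 1; funext l
  rw [Finset.sum_apply, Finset.mul_sum]

variable (K L N : ℕ)

/-- bucket of a real number -/
noncomputable def bkt (x : ℝ) : ℕ := min (Nat.floor (x * (K+1))) K

lemma bkt_le (x : ℝ) : bkt K x ≤ K := min_le_right _ _

/-- bucket as an element of `Fin (K+1)` -/
noncomputable def bktF (x : ℝ) : Fin (K+1) := ⟨bkt K x, by have := bkt_le K x; omega⟩

/-- the good set of feature values -/
def GoodR : Set ℝ :=
  {x | x ∈ Set.Icc (0:ℝ) 1 ∧ ∀ t : ℕ, 1 ≤ t → t ≤ K → 1/(L:ℝ) ≤ |x - t/(K+1)|}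

lemma theta_lt_iff {x : ℝ} (hL : 1 ≤ L) (hx : x ∈ GoodR K L) {t : ℕ} (ht1 : 1 ≤ t)
    (ht2 : t ≤ K) : (t:ℝ)/(K+1) < x ↔ t ≤ bkt K x := by
  obtain ⟨⟨hx0, hx1⟩, hmar⟩ := hx
  have hK1 : (0:ℝ) < (K:ℝ)+1 := by positivity
  have hLpos : (0:ℝ) < 1/(L:ℝ) := by
    have : (0:ℝ) < (L:ℝ) := by exact_mod_cast hL
    positivity
  constructor
  · intro h
    have h2 : (t:ℝ) < x * (K+1) := by
      rw [div_lt_iff₀ hK1] at h; linarith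
    have h3 : t ≤ Nat.floor (x * (K+1)) := Nat.le_floor h2.le
    exact le_min h3 ht2
  · intro h
    have h2 : t ≤ Nat.floor (x * (K+1)) := le_trans h (min_le_left _ _)
    have h3 : (t:ℝ) ≤ x * (K+1) := by
      calc (t:ℝ) ≤ (Nat.floor (x * (K+1)) : ℝ) := by exact_mod_cast h2
        _ ≤ x * (K+1) := Nat.floor_le (by positivity)
    have h4 : (t:ℝ)/(K+1) ≤ x := by rw [div_le_iff₀ hK1]; linarith
    rcases lt_or_eq_of_le h4 with h5 | h5
    · exact h5
    · exfalso
      have := hmar t ht1 ht2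
      rw [← h5] at this
      simp at this
      linarith

/-- extended h-coefficient row: represents `h_t` for `1 ≤ t ≤ K`, the constant `1`
for `t = 0` and the constant `-1` for `t > K`. -/
noncomputable def hvec (t : ℕ) : Fin (1+K) → ℝ :=
  if h : 1 ≤ t ∧ t ≤ K then ee ⟨t, by omega⟩
  else if t = 0 then ee ⟨0, by omega⟩ else -(ee ⟨0, by omega⟩)

/-- bucket-indicator row -/
noncomputable def bRow (j : ℕ) : Fin (1+K) → ℝ := fun l => (hvec K j l - hvec K (j+1) l)/2

section AuxGNN2

open Finset

variable (K L N : ℕ)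

/-- dimension of the second layer -/
def d2 : ℕ := (K+1)*(K+1) + ((K+1) + (N+1))

/-- index bookkeeping for the second layer -/
def ψ2 : ((Fin (K+1) × Fin (K+1)) ⊕ (Fin (K+1) ⊕ Fin (N+1))) ≃ Fin (d2 K N) :=
  (Equiv.sumCongr finProdFinEquiv finSumFinEquiv).trans finSumFinEquiv

def idxE (j k : Fin (K+1)) : Fin (d2 K N) := ψ2 K N (Sum.inl (j,k))
def idxO (j : Fin (K+1)) : Fin (d2 K N) := ψ2 K N (Sum.inr (Sum.inl j))
def idxF (m : Fin (N+1)) : Fin (d2 K N) := ψ2 K N (Sum.inr (Sum.inr m))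

/-- first-layer weights -/
noncomputable def W0s : Matrix (Fin (1+K)) (Fin 1) ℝ := fun i _ => if (i:ℕ) = 0 then 0 else L
noncomputable def b0 : Fin (1+K) → ℝ := fun i => if (i:ℕ) = 0 then 2 else -((L:ℝ) * ((i:ℕ):ℝ)/(K+1))

/-- second-layer weights -/
noncomputable def W1s : Matrix (Fin (d2 K N)) (Fin (1+K)) ℝ := fun i =>
  match (ψ2 K N).symm i with
  | .inl (j,_) => fun l => (2*(N:ℝ)+2) * bRow K j l
  | .inr (.inl j) => bRow K j
  | .inr (.inr _) => 0

noncomputable def W1n : Matrix (Fin (d2 K N)) (Fin (1+K)) ℝ := fun i =>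
  match (ψ2 K N).symm i with
  | .inl (_,k) => fun l => 2 * bRow K k l
  | _ => 0

noncomputable def W1g : Matrix (Fin (d2 K N)) (Fin (1+K)) ℝ := fun i =>
  match (ψ2 K N).symm i with
  | .inr (.inr _) => fun l => 2 * ee (⟨0, by omega⟩ : Fin (1+K)) l
  | _ => 0

noncomputable def b1 : Fin (d2 K N) → ℝ := fun i =>
  match (ψ2 K N).symm i with
  | .inl _ => -(2*(N:ℝ)+3)
  | .inr (.inl _) => 0
  | .inr (.inr m) => -(2*((m:ℕ):ℝ)+1)

/-- The SumGNN⁺ used in the construction. -/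
noncomputable def theM : SumGNN where
  T := 2
  d := fun t => match t with | 0 => 1 | 1 => 1+K | _+2 => d2 K N
  Ws := fun t => match t with | 0 => W0s K L | 1 => W1s K N | _+2 => 0
  Wn := fun t => match t with | 0 => 0 | 1 => W1n K N | _+2 => 0
  Wg := fun t => match t with | 0 => 0 | 1 => W1g K N | _+2 => 0
  b := fun t => match t with | 0 => b0 K L | 1 => b1 K N | _+2 => 0
  σ := linSigmoid

variable {n : ℕ} (A : Fin n → Fin n → Bool) (X : Fin n → Fin 1 → ℝ)

lemma embed_one_apply (v : Fin n) (i : Fin (1+K)) :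
    (theM K L N).embed A X 1 v i =
      if (i:ℕ) = 0 then 1
      else linSigmoid ((L:ℝ) * X v 0 - (L:ℝ) * ((i:ℕ):ℝ)/(K+1)) := by
  show linSigmoid _ = _
  have hws : (theM K L N).Ws 0 = W0s K L := rfl
  have hwn : (theM K L N).Wn 0 = 0 := rfl
  have hwg : (theM K L N).Wg 0 = 0 := rfl
  have hb : (theM K L N).b 0 = b0 K L := rfl
  rw [hws, hwn, hwg, hb, Matrix.zero_mulVec, Matrix.zero_mulVec]
  simp only [Pi.zero_apply, add_zero, zero_add]
  erw [Pi.zero_apply, add_zero, add_zero]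
  have hmv : (W0s K L).mulVec ((theM K L N).embed A X 0 v) i
      = (if (i:ℕ) = 0 then 0 else (L:ℝ)) * X v 0 := by
    show ∑ l : Fin 1, W0s K L i l * X v l = _
    rw [Fin.sum_univ_one]
    rfl
  erw [hmv]
  by_cases h0 : (i:ℕ) = 0
  · rw [if_pos h0, if_pos h0]
    show linSigmoid (0 * X v 0 + b0 K L i) = 1
    have : b0 K L i = 2 := by simp [b0, h0]
    rw [this, zero_mul, zero_add, linSigmoid_two]
  · rw [if_neg h0, if_neg h0]
    have : b0 K L i = -((L:ℝ) * ((i:ℕ):ℝ)/(K+1)) := by simp [b0, h0]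
    rw [this]
    ring_nf

lemma embed_one_zero (v : Fin n) :
    (theM K L N).embed A X 1 v (⟨0, by omega⟩ : Fin (1+K)) = 1 := by
  rw [embed_one_apply]
  simp

lemma embed_one_h (hL : 1 ≤ L) (hx : X v 0 ∈ GoodR K L) {t : ℕ} (ht1 : 1 ≤ t) (ht2 : t ≤ K) :
    (theM K L N).embed A X 1 v (⟨t, by omega⟩ : Fin (1+K)) =
      if t ≤ bkt K (X v 0) then 1 else -1 := by
  rw [embed_one_apply]
  rw [if_neg (show ¬(t = 0) by omega)]
  simp only
  set x := X v 0 with hxdef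
  have hK1 : (0:ℝ) < (K:ℝ)+1 := by positivity
  have hLpos : (0:ℝ) < (L:ℝ) := by exact_mod_cast hL
  have hmar : 1/(L:ℝ) ≤ |x - (t:ℝ)/(K+1)| := hx.2 t ht1 ht2
  have harg : (L:ℝ) * x - (L:ℝ) * (t:ℝ)/(K+1) = (L:ℝ) * (x - (t:ℝ)/(K+1)) := by ring
  by_cases h : (t:ℝ)/(K+1) < x
  · rw [if_pos ((theta_lt_iff K L hL hx ht1 ht2).mp h)]
    apply linSigmoid_of_ge
    rw [harg]
    have habs : |x - (t:ℝ)/(K+1)| = x - (t:ℝ)/(K+1) := abs_of_pos (by linarith)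
    rw [habs] at hmar
    calc (1:ℝ) = (L:ℝ) * (1/(L:ℝ)) := by field_simp
      _ ≤ (L:ℝ) * (x - (t:ℝ)/(K+1)) := by
          apply mul_le_mul_of_nonneg_left hmar hLpos.le
  · rw [if_neg (fun hc => h ((theta_lt_iff K L hL hx ht1 ht2).mpr hc))]
    apply linSigmoid_of_le
    push_neg at h
    have hne : x ≠ (t:ℝ)/(K+1) := by
      intro hc
      rw [hc, sub_self, abs_zero] at hmar
      have h01 : (0:ℝ) < 1/(L:ℝ) := by positivity
      linarith
    have hlt : x < (t:ℝ)/(K+1) := lt_of_le_of_ne h hne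
    have habs : |x - (t:ℝ)/(K+1)| = -(x - (t:ℝ)/(K+1)) := abs_of_neg (by linarith)
    rw [habs] at hmar
    rw [harg]
    calc (L:ℝ) * (x - (t:ℝ)/(K+1)) ≤ (L:ℝ) * (-(1/(L:ℝ))) := by
          apply mul_le_mul_of_nonneg_left (by linarith) hLpos.le
      _ = -1 := by field_simp

lemma hvec_dot (hL : 1 ≤ L) (v : Fin n) (hx : X v 0 ∈ GoodR K L) {t : ℕ} (ht : t ≤ K+1) :
    ∑ l, hvec K t l * (theM K L N).embed A X 1 v l =
      if t ≤ bkt K (X v 0) then 1 else -1 := by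
  by_cases h1 : 1 ≤ t ∧ t ≤ K
  · rw [show hvec K t = ee ⟨t, by omega⟩ by rw [hvec, dif_pos h1]]
    erw [sum_ee]
    exact embed_one_h K L N A X hL hx h1.1 h1.2
  · by_cases h0 : t = 0
    · subst h0
      rw [show hvec K 0 = ee ⟨0, by omega⟩ by rw [hvec]; simp]
      erw [sum_ee, embed_one_zero, if_pos (Nat.zero_le _)]
    · have htK : t = K + 1 := by omega
      subst htK
      rw [show hvec K (K+1) = -(ee ⟨0, by omega⟩) by
        rw [hvec, dif_neg (by omega), if_neg (by omega)]]
      have : ∑ l, (-(ee (⟨0, by omega⟩ : Fin (1+K)))) l *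
          (theM K L N).embed A X 1 v l
          = -∑ l, ee (⟨0, by omega⟩ : Fin (1+K)) l * (theM K L N).embed A X 1 v l := by
        rw [← Finset.sum_neg_distrib]
        congr 1; funext l; simp
      erw [this, sum_ee, embed_one_zero]
      rw [if_neg (by have := bkt_le K (X v 0); omega)]

lemma bRow_dot (hL : 1 ≤ L) (v : Fin n) (hx : X v 0 ∈ GoodR K L) {j : ℕ} (hj : j ≤ K) :
    ∑ l, bRow K j l * (theM K L N).embed A X 1 v l =
      if bkt K (X v 0) = j then 1 else 0 := by
  have hsplit : ∀ l, bRow K j l * (theM K L N).embed A X 1 v l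
      = (hvec K j l * (theM K L N).embed A X 1 v l
         - hvec K (j+1) l * (theM K L N).embed A X 1 v l) / 2 := by
    intro l; rw [bRow]; ring
  rw [Finset.sum_congr rfl (fun l _ => hsplit l), ← Finset.sum_div,
    Finset.sum_sub_distrib,
    hvec_dot K L N A X hL v hx (by omega : j ≤ K + 1),
    hvec_dot K L N A X hL v hx (by omega : j + 1 ≤ K + 1)]
  set m := bkt K (X v 0)
  by_cases hjm : j ≤ m
  · by_cases hjm1 : j + 1 ≤ m
    · rw [if_pos hjm, if_pos hjm1, if_neg (by omega)]; norm_num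
    · rw [if_pos hjm, if_neg hjm1, if_pos (by omega)]; norm_num
  · rw [if_neg hjm, if_neg (by omega), if_neg (by omega)]; norm_num

lemma embed_two_apply (v : Fin n) (i : Fin (d2 K N)) :
    (theM K L N).embed A X 2 v i = linSigmoid (
      (∑ l, W1s K N i l * (theM K L N).embed A X 1 v l)
      + (∑ l, W1n K N i l * (∑ u ∈ nbhd A v, (theM K L N).embed A X 1 u) l)
      + (∑ l, W1g K N i l * (∑ u : Fin n, (theM K L N).embed A X 1 u) l)
      + b1 K N i) := by
  rfl

lemma W1s_E (j k : Fin (K+1)) :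
    W1s K N (idxE K N j k) = fun l => (2*(N:ℝ)+2) * bRow K j l := by
  rw [W1s, idxE, Equiv.symm_apply_apply]

lemma W1n_E (j k : Fin (K+1)) :
    W1n K N (idxE K N j k) = fun l => 2 * bRow K k l := by
  rw [W1n, idxE, Equiv.symm_apply_apply]

lemma W1g_E (j k : Fin (K+1)) : W1g K N (idxE K N j k) = 0 := by
  rw [W1g, idxE, Equiv.symm_apply_apply]

lemma b1_E (j k : Fin (K+1)) : b1 K N (idxE K N j k) = -(2*(N:ℝ)+3) := by
  rw [b1, idxE, Equiv.symm_apply_apply]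

lemma W1s_O (j : Fin (K+1)) : W1s K N (idxO K N j) = bRow K j := by
  rw [W1s, idxO, Equiv.symm_apply_apply]

lemma W1n_O (j : Fin (K+1)) : W1n K N (idxO K N j) = 0 := by
  rw [W1n, idxO, Equiv.symm_apply_apply]

lemma W1g_O (j : Fin (K+1)) : W1g K N (idxO K N j) = 0 := by
  rw [W1g, idxO, Equiv.symm_apply_apply]

lemma b1_O (j : Fin (K+1)) : b1 K N (idxO K N j) = 0 := by
  rw [b1, idxO, Equiv.symm_apply_apply]

lemma W1s_F (m : Fin (N+1)) : W1s K N (idxF K N m) = 0 := by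
  rw [W1s, idxF, Equiv.symm_apply_apply]

lemma W1n_F (m : Fin (N+1)) : W1n K N (idxF K N m) = 0 := by
  rw [W1n, idxF, Equiv.symm_apply_apply]

lemma W1g_F (m : Fin (N+1)) :
    W1g K N (idxF K N m) = fun l => 2 * ee (⟨0, by omega⟩ : Fin (1+K)) l := by
  rw [W1g, idxF, Equiv.symm_apply_apply]

lemma b1_F (m : Fin (N+1)) : b1 K N (idxF K N m) = -(2*((m:ℕ):ℝ)+1) := by
  rw [b1, idxF, Equiv.symm_apply_apply]

lemma zero_dot {m : ℕ} (z : Fin m → ℝ) : ∑ l, (0 : Fin m → ℝ) l * z l = 0 := by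
  simp

/-- count of neighbours of `v` in bucket `k` -/
noncomputable def mcnt (v : Fin n) (k : ℕ) : ℕ :=
  ((nbhd A v).filter (fun u => bkt K (X u 0) = k)).card

lemma nbhd_dot (hL : 1 ≤ L) (hXg : ∀ u, X u 0 ∈ GoodR K L) (v : Fin n) {k : ℕ}
    (hk : k ≤ K) :
    ∑ l, bRow K k l * (∑ u ∈ nbhd A v, (theM K L N).embed A X 1 u) l
      = (mcnt K A X v k : ℝ) := by
  erw [dot_sum]
  rw [Finset.sum_congr rfl (fun u _ => bRow_dot K L N A X hL u (hXg u) hk)]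
  rw [Finset.sum_boole, mcnt]

lemma embed_two_E (hL : 1 ≤ L) (hXg : ∀ u, X u 0 ∈ GoodR K L) (hnN : n ≤ N)
    (v : Fin n) (j k : Fin (K+1)) :
    (theM K L N).embed A X 2 v (idxE K N j k) =
      if bkt K (X v 0) = (j:ℕ) ∧ ∃ u ∈ nbhd A v, bkt K (X u 0) = (k:ℕ)
      then 1 else -1 := by
  erw [embed_two_apply, W1s_E, W1n_E, W1g_E, b1_E, zero_dot]
  have h1 : ∑ l, (2*(N:ℝ)+2) * bRow K j l * (theM K L N).embed A X 1 v l
      = (2*(N:ℝ)+2) * (if bkt K (X v 0) = (j:ℕ) then 1 else 0) := by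
    simp only [mul_assoc, ← Finset.mul_sum]
    rw [bRow_dot K L N A X hL v (hXg v) (by omega : (j:ℕ) ≤ K)]
  have h2 : ∑ l, 2 * bRow K k l * (∑ u ∈ nbhd A v, (theM K L N).embed A X 1 u) l
      = 2 * (mcnt K A X v (k:ℕ) : ℝ) := by
    simp only [mul_assoc, ← Finset.mul_sum]
    rw [nbhd_dot K L N A X hL hXg v (by omega : (k:ℕ) ≤ K)]
  rw [h1, h2]
  have hmle : mcnt K A X v (k:ℕ) ≤ n := by
    apply le_trans (Finset.card_filter_le _ _)
    apply le_trans (Finset.card_filter_le _ _)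
    simp
  by_cases hbv : bkt K (X v 0) = (j:ℕ)
  · rw [if_pos hbv]
    by_cases hex : ∃ u ∈ nbhd A v, bkt K (X u 0) = (k:ℕ)
    · rw [if_pos ⟨hbv, hex⟩]
      have hc1 : 1 ≤ mcnt K A X v (k:ℕ) := by
        obtain ⟨u, hu, hb⟩ := hex
        exact Finset.card_pos.mpr ⟨u, Finset.mem_filter.mpr ⟨hu, hb⟩⟩
      apply linSigmoid_of_ge
      have : (1:ℝ) ≤ (mcnt K A X v (k:ℕ) : ℝ) := by exact_mod_cast hc1
      linarith
    · have hc0 : mcnt K A X v (k:ℕ) = 0 := by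
        rw [mcnt, Finset.card_eq_zero, Finset.filter_eq_empty_iff]
        intro u hu
        exact fun hc => hex ⟨u, hu, hc⟩
      rw [if_neg (fun hc => hex hc.2), hc0]
      apply linSigmoid_of_le
      norm_num
      linarith
  · rw [if_neg hbv, if_neg (fun hc => hbv hc.1)]
    apply linSigmoid_of_le
    have : (mcnt K A X v (k:ℕ) : ℝ) ≤ (N:ℝ) := by
      exact_mod_cast le_trans hmle hnN
    linarith

lemma embed_two_O (hL : 1 ≤ L) (hXg : ∀ u, X u 0 ∈ GoodR K L) (v : Fin n)
    (j : Fin (K+1)) :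
    (theM K L N).embed A X 2 v (idxO K N j) =
      if bkt K (X v 0) = (j:ℕ) then 1 else 0 := by
  erw [embed_two_apply, W1s_O, W1n_O, W1g_O, b1_O, zero_dot, zero_dot]
  rw [bRow_dot K L N A X hL v (hXg v) (by omega : (j:ℕ) ≤ K)]
  by_cases hbv : bkt K (X v 0) = (j:ℕ)
  · rw [if_pos hbv]
    simpa using linSigmoid_one
  · rw [if_neg hbv]
    simpa using linSigmoid_zero

lemma embed_two_F (v : Fin n) (m : Fin (N+1)) :
    (theM K L N).embed A X 2 v (idxF K N m) =
      if (m:ℕ) + 1 ≤ n then 1 else -1 := by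
  erw [embed_two_apply, W1s_F, W1n_F, W1g_F, b1_F, zero_dot, zero_dot]
  have h3 : ∑ l, 2 * ee (⟨0, by omega⟩ : Fin (1+K)) l *
      (∑ u : Fin n, (theM K L N).embed A X 1 u) l = 2 * (n:ℝ) := by
    have hone : ∀ u : Fin n,
        ∑ l, ee (⟨0, by omega⟩ : Fin (1+K)) l * (theM K L N).embed A X 1 u l = 1 := by
      intro u
      erw [sum_ee]
      exact embed_one_zero K L N A X u
    simp only [mul_assoc, ← Finset.mul_sum]
    erw [dot_sum, Finset.sum_congr rfl (fun u _ => hone u)]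
    simp
  rw [h3]
  by_cases hm : (m:ℕ) + 1 ≤ n
  · rw [if_pos hm]
    apply linSigmoid_of_ge
    have : ((m:ℕ):ℝ) + 1 ≤ (n:ℝ) := by exact_mod_cast hm
    linarith
  · rw [if_neg hm]
    apply linSigmoid_of_le
    have : (n:ℝ) ≤ ((m:ℕ):ℝ) := by
      have : n ≤ (m:ℕ) := by omega
      exact_mod_cast this
    linarith

lemma sum_if_pm {n : ℕ} (p : Fin n → Prop) [DecidablePred p] :
    ∑ v : Fin n, (if p v then (1:ℝ) else -1)
      = 2 * ((Finset.univ.filter p).card : ℝ) - n := by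
  have h : ∀ v, (if p v then (1:ℝ) else -1) = 2 * (if p v then (1:ℝ) else 0) - 1 := by
    intro v; split <;> norm_num
  rw [Finset.sum_congr rfl (fun v _ => h v), Finset.sum_sub_distrib, ← Finset.mul_sum,
    Finset.sum_boole]
  simp

lemma y_F (hn : 0 < n) (m : Fin (N+1)) :
    (n:ℝ)⁻¹ * ∑ v, (theM K L N).embed A X 2 v (idxF K N m)
      = if (m:ℕ)+1 ≤ n then 1 else -1 := by
  have hn0 : (n:ℝ) ≠ 0 := by positivity
  rw [Finset.sum_congr rfl (fun v _ => embed_two_F K L N A X v m)]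
  rw [Finset.sum_const, Finset.card_univ, Fintype.card_fin, nsmul_eq_mul,
    ← mul_assoc, inv_mul_cancel₀ hn0, one_mul]

lemma y_O_ne (hn : 0 < n) (hL : 1 ≤ L) (hXg : ∀ u, X u 0 ∈ GoodR K L)
    (j : Fin (K+1)) :
    ((n:ℝ)⁻¹ * ∑ v, (theM K L N).embed A X 2 v (idxO K N j) ≠ 0)
      ↔ ∃ v, bkt K (X v 0) = (j:ℕ) := by
  classical
  have hn0 : (n:ℝ) ≠ 0 := by positivity
  rw [Finset.sum_congr rfl (fun v _ => embed_two_O K L N A X hL hXg v j),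
    Finset.sum_boole]
  rw [mul_ne_zero_iff]
  constructor
  · rintro ⟨-, hc⟩
    have : (Finset.univ.filter fun v => bkt K (X v 0) = (j:ℕ)).Nonempty := by
      rw [← Finset.card_pos]
      have : ((Finset.univ.filter fun v => bkt K (X v 0) = (j:ℕ)).card : ℝ) ≠ 0 := hc
      have := Nat.cast_ne_zero.mp this
      omega
    obtain ⟨v, hv⟩ := this
    exact ⟨v, (Finset.mem_filter.mp hv).2⟩
  · rintro ⟨v, hv⟩
    refine ⟨inv_ne_zero hn0, ?_⟩
    have : 0 < (Finset.univ.filter fun v => bkt K (X v 0) = (j:ℕ)).card :=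
      Finset.card_pos.mpr ⟨v, Finset.mem_filter.mpr ⟨Finset.mem_univ _, hv⟩⟩
    positivity

lemma y_E_ne (hn : 0 < n) (hL : 1 ≤ L) (hXg : ∀ u, X u 0 ∈ GoodR K L) (hnN : n ≤ N)
    (j k : Fin (K+1)) :
    ((n:ℝ)⁻¹ * ∑ v, (theM K L N).embed A X 2 v (idxE K N j k) ≠ -1)
      ↔ ∃ v, bkt K (X v 0) = (j:ℕ) ∧ ∃ u ∈ nbhd A v, bkt K (X u 0) = (k:ℕ) := by
  classical
  have hn0 : (n:ℝ) ≠ 0 := by positivity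
  rw [Finset.sum_congr rfl (fun v _ => embed_two_E K L N A X hL hXg hnN v j k),
    sum_if_pm]
  set c := (Finset.univ.filter fun v =>
    bkt K (X v 0) = (j:ℕ) ∧ ∃ u ∈ nbhd A v, bkt K (X u 0) = (k:ℕ)).card with hc
  have key : (n:ℝ)⁻¹ * (2 * (c:ℝ) - n) = -1 ↔ (c:ℝ) = 0 := by
    rw [inv_mul_eq_div, div_eq_iff hn0]
    constructor <;> intro h <;> linarith
  constructor
  · intro hne
    have hcne : (c:ℝ) ≠ 0 := fun h => hne (key.mpr h)
    have : (Finset.univ.filter fun v =>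
        bkt K (X v 0) = (j:ℕ) ∧ ∃ u ∈ nbhd A v, bkt K (X u 0) = (k:ℕ)).Nonempty := by
      rw [← Finset.card_pos]
      have := Nat.cast_ne_zero.mp hcne
      omega
    obtain ⟨v, hv⟩ := this
    exact ⟨v, (Finset.mem_filter.mp hv).2⟩
  · rintro ⟨v, hv⟩
    intro heq
    have hc0 : (c:ℝ) = 0 := key.mp heq
    have : 0 < c :=
      Finset.card_pos.mpr ⟨v, Finset.mem_filter.mpr ⟨Finset.mem_univ _, hv⟩⟩
    rw [Nat.cast_eq_zero] at hc0
    omega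

end AuxGNN2

section Decoder

open Finset

open scoped Classical in
/-- the set of occupied buckets -/
noncomputable def occS (K N : ℕ) (y : Fin (d2 K N) → ℝ) : Finset (Fin (K+1)) :=
  Finset.univ.filter fun j : Fin (K+1) => y (idxO K N j) ≠ 0

/-- index into the sorted list of occupied buckets -/
noncomputable def jdx (K N : ℕ) (y : Fin (d2 K N) → ℝ) (t : ℕ) : Fin (K+1) :=
  ((occS K N y).sort (· ≤ ·)).getD t ⟨0, by omega⟩

lemma mem_occS (K N : ℕ) (y : Fin (d2 K N) → ℝ) (j : Fin (K+1)) :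
    j ∈ occS K N y ↔ y (idxO K N j) ≠ 0 := by
  rw [occS, Finset.mem_filter]
  simp

lemma jdx_mem (K N : ℕ) (y : Fin (d2 K N) → ℝ) {t : ℕ}
    (ht : t < (occS K N y).card) : jdx K N y t ∈ occS K N y := by
  rw [jdx]
  have hlen : ((occS K N y).sort (· ≤ ·)).length = (occS K N y).card :=
    Finset.length_sort _
  rw [List.getD_eq_getElem _ _ (by rw [hlen]; exact ht)]
  rw [← Finset.mem_sort (α := Fin (K+1)) (· ≤ ·)]
  exact List.getElem_mem _

lemma jdx_inj (K N : ℕ) (y : Fin (d2 K N) → ℝ) {t s : ℕ}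
    (ht : t < (occS K N y).card) (hs : s < (occS K N y).card)
    (h : jdx K N y t = jdx K N y s) : t = s := by
  have hlen : ((occS K N y).sort (· ≤ ·)).length = (occS K N y).card :=
    Finset.length_sort _
  rw [jdx, jdx, List.getD_eq_getElem _ _ (by rw [hlen]; exact ht),
    List.getD_eq_getElem _ _ (by rw [hlen]; exact hs)] at h
  exact ((Finset.sort_nodup _ _).getElem_inj_iff).mp h

open scoped Classical in
/-- the classifier -/
noncomputable def theC (ξ : (n : ℕ) → (Fin n → Fin n → Bool) → Bool) (bb : Bool)
    (K N : ℕ) : (Fin (d2 K N) → ℝ) → Bool := fun y =>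
  if y (idxF K N ⟨0, by omega⟩) ≠ 1 then ξ 0 (fun _ _ => false)
  else if y (idxF K N ⟨N, by omega⟩) = 1 then bb
  else ξ ((Finset.univ.filter fun t : Fin (N+1) => y (idxF K N t) = 1).card)
    (fun a b =>
      if y (idxE K N (jdx K N y (a:ℕ)) (jdx K N y (b:ℕ))) ≠ -1 then true else false)

open scoped Classical in
lemma theC_eq_of (ξ : (n : ℕ) → (Fin n → Fin n → Bool) → Bool) (bb : Bool)
    (K N : ℕ) (y : Fin (d2 K N) → ℝ)
    (h1 : y (idxF K N ⟨0, by omega⟩) = 1) (h2 : y (idxF K N ⟨N, by omega⟩) ≠ 1) :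
    theC ξ bb K N y =
      ξ ((Finset.univ.filter fun t : Fin (N+1) => y (idxF K N t) = 1).card)
        (fun a b =>
          if y (idxE K N (jdx K N y (a:ℕ)) (jdx K N y (b:ℕ))) ≠ -1
          then true else false) := by
  rw [theC, if_neg (not_not_intro h1), if_neg h2]

open scoped Classical in
lemma theC_eq_bb (ξ : (n : ℕ) → (Fin n → Fin n → Bool) → Bool) (bb : Bool)
    (K N : ℕ) (y : Fin (d2 K N) → ℝ)
    (h1 : y (idxF K N ⟨0, by omega⟩) = 1) (h2 : y (idxF K N ⟨N, by omega⟩) = 1) :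
    theC ξ bb K N y = bb := by
  rw [theC, if_neg (not_not_intro h1), if_pos h2]

open scoped Classical in
lemma theC_eq_zero (ξ : (n : ℕ) → (Fin n → Fin n → Bool) → Bool) (bb : Bool)
    (K N : ℕ) (y : Fin (d2 K N) → ℝ)
    (h1 : y (idxF K N ⟨0, by omega⟩) ≠ 1) :
    theC ξ bb K N y = ξ 0 (fun _ _ => false) := by
  rw [theC, if_pos h1]

open scoped Classical in
lemma theC_card (K N : ℕ) (y : Fin (d2 K N) → ℝ) {n : ℕ} (hn : n ≤ N + 1)
    (hyF : ∀ m : Fin (N+1), y (idxF K N m) = if (m:ℕ)+1 ≤ n then 1 else -1) :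
    (Finset.univ.filter fun t : Fin (N+1) => y (idxF K N t) = 1).card = n := by
  have hfil : (Finset.univ.filter fun t : Fin (N+1) => y (idxF K N t) = 1)
      = Finset.univ.filter (fun t : Fin (N+1) => (t:ℕ) < n) := by
    apply Finset.filter_congr
    intro t _
    rw [hyF t]
    by_cases h : (t:ℕ)+1 ≤ n
    · rw [if_pos h]
      constructor
      · intro _; omega
      · intro _; rfl
    · rw [if_neg h]
      constructor
      · intro hc; norm_num at hc
      · intro hc; omega
  have hmap : Finset.univ.filter (fun t : Fin (N+1) => (t:ℕ) < n)
      = Finset.map (Fin.castLEEmb hn) Finset.univ := by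
    ext j
    rw [Finset.mem_filter, Finset.mem_map]
    constructor
    · rintro ⟨-, hj⟩
      exact ⟨⟨(j:ℕ), hj⟩, Finset.mem_univ _, by simp [Fin.castLEEmb]⟩
    · rintro ⟨a, -, ha⟩
      refine ⟨Finset.mem_univ _, ?_⟩
      rw [← ha]
      simpa [Fin.castLEEmb] using a.isLt
  rw [hfil, hmap, Finset.card_map, Finset.card_univ, Fintype.card_fin]

section Correct

open Finset

variable (K L N : ℕ) (ξ : (n : ℕ) → (Fin n → Fin n → Bool) → Bool) (bb : Bool)

lemma output_n0 (A : Fin 0 → Fin 0 → Bool) (X : Fin 0 → Fin 1 → ℝ) :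
    (theM K L N).output (theC ξ bb K N) A X = ξ 0 A := by
  have hy : (fun i => ((0:ℕ):ℝ)⁻¹ * ∑ v : Fin 0, (theM K L N).embed A X 2 v i)
      = fun _ : Fin (d2 K N) => (0:ℝ) := by
    funext i
    simp
  have hout : (theM K L N).output (theC ξ bb K N) A X
      = theC ξ bb K N (fun _ => (0:ℝ)) := by
    have h0 : (theM K L N).output (theC ξ bb K N) A X
        = theC ξ bb K N (fun i => ((0:ℕ):ℝ)⁻¹ * ∑ v : Fin 0, (theM K L N).embed A X 2 v i) := rfl
    rw [h0]
    exact congrArg _ hy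
  rw [hout, theC_eq_zero _ _ _ _ (fun _ => (0:ℝ)) (by norm_num)]
  congr 1
  funext a
  exact a.elim0

variable {n : ℕ} (A : Fin n → Fin n → Bool) (X : Fin n → Fin 1 → ℝ)

lemma output_large (hNn : N < n) :
    (theM K L N).output (theC ξ bb K N) A X = bb := by
  have hn : 0 < n := by omega
  have hout : (theM K L N).output (theC ξ bb K N) A X
      = theC ξ bb K N (fun i => (n:ℝ)⁻¹ * ∑ v, (theM K L N).embed A X 2 v i) := rfl
  rw [hout]
  apply theC_eq_bb
  · rw [y_F K L N A X hn ⟨0, by omega⟩, if_pos (by omega : (0:ℕ) + 1 ≤ n)]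
  · rw [y_F K L N A X hn ⟨N, by omega⟩]
    rw [if_pos]
    show N + 1 ≤ n
    omega

lemma output_small (hL : 1 ≤ L) (hinv : IsGraphInvariant ξ)
    (hn1 : 1 ≤ n) (hnN : n ≤ N)
    (hsym : ∀ u v, A u v = A v u) (hirr : ∀ v, A v v = false)
    (hXg : ∀ v, X v 0 ∈ GoodR K L)
    (hinj : Function.Injective fun v => bkt K (X v 0)) :
    (theM K L N).output (theC ξ bb K N) A X = ξ n A := by
  classical
  have hn : 0 < n := hn1
  set y : Fin (d2 K N) → ℝ :=
    fun i => (n:ℝ)⁻¹ * ∑ v, (theM K L N).embed A X 2 v i with hydef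
  have hout : (theM K L N).output (theC ξ bb K N) A X = theC ξ bb K N y := rfl
  rw [hout]
  have hyF : ∀ m : Fin (N+1), y (idxF K N m) = if (m:ℕ)+1 ≤ n then 1 else -1 :=
    fun m => y_F K L N A X hn m
  have hyO : ∀ j : Fin (K+1),
      (y (idxO K N j) ≠ 0 ↔ ∃ v, bkt K (X v 0) = (j:ℕ)) :=
    fun j => y_O_ne K L N A X hn hL hXg j
  have hyE : ∀ j k : Fin (K+1),
      (y (idxE K N j k) ≠ -1 ↔
        ∃ v, bkt K (X v 0) = (j:ℕ) ∧ ∃ u ∈ nbhd A v, bkt K (X u 0) = (k:ℕ)) :=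
    fun j k => y_E_ne K L N A X hn hL hXg hnN j k
  -- the injective bucket map into `Fin (K+1)`
  have hinjF : Function.Injective fun v => bktF K (X v 0) := by
    intro a b h
    apply hinj
    exact congrArg Fin.val h
  -- occupied buckets
  have hSim : occS K N y = Finset.univ.image fun v => bktF K (X v 0) := by
    ext j
    rw [mem_occS, hyO j, Finset.mem_image]
    constructor
    · rintro ⟨v, hv⟩
      exact ⟨v, Finset.mem_univ _, Fin.ext hv⟩
    · rintro ⟨v, -, hv⟩
      exact ⟨v, congrArg Fin.val hv⟩
  have hScard : (occS K N y).card = n := by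
    rw [hSim, Finset.card_image_of_injective _ hinjF, Finset.card_univ,
      Fintype.card_fin]
  -- the vertex sitting in the `a`-th occupied bucket
  have hexu : ∀ a : Fin n, ∃! v, v ∈ Finset.univ ∧ bktF K (X v 0) = jdx K N y (a:ℕ) := by
    intro a
    have hmem : jdx K N y (a:ℕ) ∈ occS K N y :=
      jdx_mem K N y (by rw [hScard]; exact a.isLt)
    rw [hSim, Finset.mem_image] at hmem
    obtain ⟨v, -, hv⟩ := hmem
    refine ⟨v, ⟨Finset.mem_univ _, hv⟩, ?_⟩
    rintro w ⟨-, hw⟩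
    exact hinjF (hw.trans hv.symm)
  set σ : Fin n → Fin n := fun a => Finset.choose _ _ (hexu a) with hσdef
  have hσ : ∀ a : Fin n, bktF K (X (σ a) 0) = jdx K N y (a:ℕ) :=
    fun a => Finset.choose_property _ _ (hexu a)
  have hσinj : Function.Injective σ := by
    intro a b h
    have : jdx K N y (a:ℕ) = jdx K N y (b:ℕ) := by
      rw [← hσ a, ← hσ b, h]
    have := jdx_inj K N y (by rw [hScard]; exact a.isLt)
      (by rw [hScard]; exact b.isLt) this
    exact Fin.ext this
  have hσbij : Function.Bijective σ := Finite.injective_iff_bijective.mp hσinj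
  -- branch conditions
  have hb1 : y (idxF K N ⟨0, by omega⟩) = 1 := by
    rw [hyF ⟨0, by omega⟩, if_pos (by omega : (0:ℕ) + 1 ≤ n)]
  have hb2 : y (idxF K N ⟨N, by omega⟩) ≠ 1 := by
    rw [hyF ⟨N, by omega⟩, if_neg (show ¬(N + 1 ≤ n) by omega)]
    norm_num
  rw [theC_eq_of ξ bb K N y hb1 hb2,
    theC_card K N y (by omega : n ≤ N + 1) hyF]
  -- identify the decoded graph with a permuted copy of `A`
  have hfun : (fun a b : Fin n =>
      if y (idxE K N (jdx K N y (a:ℕ)) (jdx K N y (b:ℕ))) ≠ -1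
      then true else false) = fun a b => A (σ a) (σ b) := by
    funext a b
    have hiff : y (idxE K N (jdx K N y (a:ℕ)) (jdx K N y (b:ℕ))) ≠ -1
        ↔ A (σ b) (σ a) = true := by
      rw [hyE]
      constructor
      · rintro ⟨v, hv1, u, hu, hu2⟩
        have hva : v = σ a := by
          apply hinjF
          show bktF K (X v 0) = bktF K (X (σ a) 0)
          apply Fin.ext
          show bkt K (X v 0) = bkt K (X (σ a) 0)
          rw [hv1]
          exact (congrArg Fin.val (hσ a)).symm
        have hub : u = σ b := by
          apply hinjF
          show bktF K (X u 0) = bktF K (X (σ b) 0)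
          apply Fin.ext
          show bkt K (X u 0) = bkt K (X (σ b) 0)
          rw [hu2]
          exact (congrArg Fin.val (hσ b)).symm
        subst hva; subst hub
        exact (Finset.mem_filter.mp hu).2
      · intro hA
        refine ⟨σ a, congrArg Fin.val (hσ a), σ b, ?_, congrArg Fin.val (hσ b)⟩
        exact Finset.mem_filter.mpr ⟨Finset.mem_univ _, hA⟩
    have hsym' : A (σ b) (σ a) = A (σ a) (σ b) := hsym _ _
    cases hval : A (σ a) (σ b) with
    | false =>
        rw [if_neg]
        intro hc
        have := hiff.mp hc
        rw [hsym', hval] at this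
        exact Bool.false_ne_true this
    | true =>
        rw [if_pos (hiff.mpr (by rw [hsym']; exact hval))]
  rw [hfun]
  exact hinv n (Equiv.ofBijective σ hσbij) A hsym hirr

end Correct

end Decoder

end AuxGNN

section MeasureSide

open Finset

variable (K L : ℕ)

/-- symmetry and irreflexivity of `adjOf` -/
lemma adjOf_symm {n : ℕ} (e : EdgeIdx n → Bool) (u v : Fin n) :
    adjOf e u v = adjOf e v u := by
  unfold adjOf
  rcases lt_trichotomy u v with h | h | h
  · rw [dif_pos h, dif_neg (asymm h), dif_pos h]
  · subst h; rfl
  · rw [dif_neg (asymm h), dif_pos h, dif_pos h]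

lemma adjOf_irrefl {n : ℕ} (e : EdgeIdx n → Bool) (v : Fin n) :
    adjOf e v v = false := by
  unfold adjOf
  rw [dif_neg (lt_irrefl v), dif_neg (lt_irrefl v)]

/-- the good set of feature matrices -/
def GoodX (n : ℕ) : Set (Fin n → Fin 1 → ℝ) :=
  {X | (∀ v, X v 0 ∈ GoodR K L) ∧ Function.Injective fun v => bkt K (X v 0)}

lemma unif01_le_volume (S : Set ℝ) (hS : MeasurableSet S) : unif01 S ≤ volume S := by
  rw [unif01, Measure.restrict_apply hS]
  exact measure_mono Set.inter_subset_left

lemma unifFeat_one (S : Set ℝ) :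
    unifFeat 1 (Set.pi Set.univ (fun _ : Fin 1 => S)) = unif01 S := by
  rw [unifFeat, Measure.pi_pi]
  exact Fin.prod_univ_one _

lemma measure_single {n : ℕ} (v : Fin n) (S : Set ℝ) :
    (Measure.pi fun _ : Fin n => unifFeat 1) {X | X v 0 ∈ S} = unif01 S := by
  classical
  have hset : {X : Fin n → Fin 1 → ℝ | X v 0 ∈ S}
      = Set.pi Set.univ (fun u => if u = v then Set.pi Set.univ (fun _ : Fin 1 => S)
          else Set.univ) := by
    ext X
    simp only [Set.mem_setOf_eq, Set.mem_pi, Set.mem_univ, true_implies]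
    constructor
    · intro h u
      by_cases hu : u = v
      · subst hu
        rw [if_pos rfl]
        intro i _
        rw [Subsingleton.elim i 0]
        exact h
      · rw [if_neg hu]
        exact Set.mem_univ _
    · intro h
      have := h v
      rw [if_pos rfl] at this
      exact this 0 (Set.mem_univ _)
  rw [hset, Measure.pi_pi]
  have hterm : ∀ u : Fin n,
      unifFeat 1 (if u = v then Set.pi Set.univ (fun _ : Fin 1 => S) else Set.univ)
      = if u = v then unif01 S else 1 := by
    intro u
    by_cases hu : u = v
    · rw [if_pos hu, if_pos hu, unifFeat_one]
    · rw [if_neg hu, if_neg hu, measure_univ]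
  rw [Finset.prod_congr rfl (fun u _ => hterm u), Finset.prod_ite_eq' Finset.univ v
    (fun _ => unif01 S), if_pos (Finset.mem_univ v)]

lemma measure_pair {n : ℕ} {v w : Fin n} (hvw : v ≠ w) (S T : Set ℝ) :
    (Measure.pi fun _ : Fin n => unifFeat 1) {X | X v 0 ∈ S ∧ X w 0 ∈ T}
      = unif01 S * unif01 T := by
  classical
  have hset : {X : Fin n → Fin 1 → ℝ | X v 0 ∈ S ∧ X w 0 ∈ T}
      = Set.pi Set.univ (fun u =>
          if u = v then Set.pi Set.univ (fun _ : Fin 1 => S)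
          else if u = w then Set.pi Set.univ (fun _ : Fin 1 => T)
          else Set.univ) := by
    ext X
    simp only [Set.mem_setOf_eq, Set.mem_pi, Set.mem_univ, true_implies]
    constructor
    · intro h u
      by_cases hu : u = v
      · subst hu
        rw [if_pos rfl]
        intro i _
        rw [Subsingleton.elim i 0]
        exact h.1
      · rw [if_neg hu]
        by_cases hu2 : u = w
        · subst hu2
          rw [if_pos rfl]
          intro i _
          rw [Subsingleton.elim i 0]
          exact h.2
        · rw [if_neg hu2]
          exact Set.mem_univ _
    · intro h
      constructor
      · have := h v
        rw [if_pos rfl] at this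
        exact this 0 (Set.mem_univ _)
      · have := h w
        rw [if_neg (Ne.symm hvw), if_pos rfl] at this
        exact this 0 (Set.mem_univ _)
  rw [hset, Measure.pi_pi]
  have hterm : ∀ u : Fin n,
      unifFeat 1 (if u = v then Set.pi Set.univ (fun _ : Fin 1 => S)
        else if u = w then Set.pi Set.univ (fun _ : Fin 1 => T) else Set.univ)
      = if u = v then unif01 S else if u = w then unif01 T else 1 := by
    intro u
    by_cases hu : u = v
    · rw [if_pos hu, if_pos hu, unifFeat_one]
    · rw [if_neg hu, if_neg hu]
      by_cases hu2 : u = w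
      · rw [if_pos hu2, if_pos hu2, unifFeat_one]
      · rw [if_neg hu2, if_neg hu2, measure_univ]
  rw [Finset.prod_congr rfl (fun u _ => hterm u)]
  rw [← Finset.prod_subset (Finset.subset_univ ({v, w} : Finset (Fin n)))
    (fun x _ hx => by
      rw [Finset.mem_insert, Finset.mem_singleton] at hx
      push_neg at hx
      rw [if_neg hx.1, if_neg hx.2])]
  rw [Finset.prod_pair hvw, if_pos rfl, if_neg (Ne.symm hvw), if_pos rfl]

lemma bkt_mem_J (x : ℝ) (hx0 : (0:ℝ) ≤ x) (hx1 : x ≤ 1) :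
    x ∈ Set.Icc ((bkt K x : ℝ)/((K:ℝ)+1)) (((bkt K x : ℝ)+1)/((K:ℝ)+1)) := by
  have hK1 : (0:ℝ) < (K:ℝ)+1 := by positivity
  have hbdef : bkt K x = min (Nat.floor (x * ((K:ℝ)+1))) K := rfl
  constructor
  · have h1n : bkt K x ≤ Nat.floor (x * ((K:ℝ)+1)) := by
      rw [hbdef]; exact min_le_left _ _
    have h1 : (bkt K x : ℝ) ≤ x * ((K:ℝ)+1) :=
      le_trans (Nat.cast_le.mpr h1n) (Nat.floor_le (by positivity))
    rw [div_le_iff₀ hK1]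
    exact h1
  · by_cases hK : bkt K x = K
    · rw [hK, le_div_iff₀ hK1]
      nlinarith
    · have hfl : bkt K x = Nat.floor (x * ((K:ℝ)+1)) := by
        rw [hbdef]
        rw [hbdef] at hK
        omega
      rw [le_div_iff₀ hK1]
      have hlt := Nat.lt_floor_add_one (x * ((K:ℝ)+1))
      have hc : ((Nat.floor (x * ((K:ℝ)+1)) : ℕ) : ℝ) = (bkt K x : ℝ) :=
        Nat.cast_inj.mpr hfl.symm
      linarith

lemma unif01_GoodR_compl (hL1 : 1 ≤ L) :
    unif01 (GoodR K L)ᶜ ≤ ENNReal.ofReal ((K:ℝ) * (2/(L:ℝ))) := by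
  have hsub : (GoodR K L)ᶜ ⊆ (Set.Icc (0:ℝ) 1)ᶜ ∪
      ⋃ t ∈ Finset.Icc 1 K, Set.Ioo ((t:ℝ)/((K:ℝ)+1) - 1/(L:ℝ))
        ((t:ℝ)/((K:ℝ)+1) + 1/(L:ℝ)) := by
    intro x hx
    rw [Set.mem_compl_iff, GoodR, Set.mem_setOf_eq] at hx
    push_neg at hx
    by_cases hI : x ∈ Set.Icc (0:ℝ) 1
    · obtain ⟨t, ht1, ht2, hlt⟩ := hx hI
      right
      refine Set.mem_biUnion (Finset.mem_Icc.mpr ⟨ht1, ht2⟩) ?_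
      rw [Set.mem_Ioo]
      rw [abs_lt] at hlt
      constructor <;> linarith [hlt.1, hlt.2]
    · exact Or.inl hI
  calc unif01 (GoodR K L)ᶜ
      ≤ unif01 ((Set.Icc (0:ℝ) 1)ᶜ) + unif01 (⋃ t ∈ Finset.Icc 1 K,
          Set.Ioo ((t:ℝ)/((K:ℝ)+1) - 1/(L:ℝ)) ((t:ℝ)/((K:ℝ)+1) + 1/(L:ℝ))) :=
        le_trans (measure_mono hsub) (measure_union_le _ _)
    _ ≤ 0 + ∑ t ∈ Finset.Icc 1 K, unif01 (Set.Ioo ((t:ℝ)/((K:ℝ)+1) - 1/(L:ℝ))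
          ((t:ℝ)/((K:ℝ)+1) + 1/(L:ℝ))) := by
        gcongr
        · rw [unif01, Measure.restrict_apply measurableSet_Icc.compl,
            Set.compl_inter_self]
          exact le_of_eq (measure_empty)
        · exact measure_biUnion_finset_le _ _
    _ ≤ 0 + ∑ t ∈ Finset.Icc 1 K, ENNReal.ofReal (2/(L:ℝ)) := by
        gcongr with t ht
        calc unif01 (Set.Ioo ((t:ℝ)/((K:ℝ)+1) - 1/(L:ℝ)) ((t:ℝ)/((K:ℝ)+1) + 1/(L:ℝ)))
            ≤ volume (Set.Ioo ((t:ℝ)/((K:ℝ)+1) - 1/(L:ℝ)) ((t:ℝ)/((K:ℝ)+1) + 1/(L:ℝ))) :=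
              unif01_le_volume _ measurableSet_Ioo
          _ = ENNReal.ofReal ((t:ℝ)/((K:ℝ)+1) + 1/(L:ℝ) - ((t:ℝ)/((K:ℝ)+1) - 1/(L:ℝ))) :=
              Real.volume_Ioo
          _ = ENNReal.ofReal (2/(L:ℝ)) := by
              congr 1
              ring
    _ = ENNReal.ofReal ((K:ℝ) * (2/(L:ℝ))) := by
        rw [zero_add, Finset.sum_const, Nat.card_Icc]
        simp only [Nat.add_sub_cancel]
        rw [nsmul_eq_mul, ← ENNReal.ofReal_natCast K, ← ENNReal.ofReal_mul (by positivity)]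

lemma unif01_J (m : ℕ) :
    unif01 (Set.Icc ((m:ℝ)/((K:ℝ)+1)) (((m:ℝ)+1)/((K:ℝ)+1)))
      ≤ ENNReal.ofReal (1/((K:ℝ)+1)) := by
  calc unif01 (Set.Icc ((m:ℝ)/((K:ℝ)+1)) (((m:ℝ)+1)/((K:ℝ)+1)))
      ≤ volume (Set.Icc ((m:ℝ)/((K:ℝ)+1)) (((m:ℝ)+1)/((K:ℝ)+1))) :=
        unif01_le_volume _ measurableSet_Icc
    _ = ENNReal.ofReal (((m:ℝ)+1)/((K:ℝ)+1) - (m:ℝ)/((K:ℝ)+1)) := Real.volume_Icc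
    _ = ENNReal.ofReal (1/((K:ℝ)+1)) := by
        congr 1
        have hK1 : ((K:ℝ)+1) ≠ 0 := by positivity
        field_simp
        ring

lemma goodX_measure {n : ℕ} (hL1 : 1 ≤ L) :
    1 - (ENNReal.ofReal ((n:ℝ) * ((K:ℝ) * (2/(L:ℝ))))
          + ENNReal.ofReal ((n:ℝ)^2 * (1/((K:ℝ)+1))))
      ≤ (Measure.pi fun _ : Fin n => unifFeat 1) (GoodX K L n) := by
  classical
  set μ := (Measure.pi fun _ : Fin n => unifFeat 1) with hμ
  set J : Fin (K+1) → Set ℝ :=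
    fun m => Set.Icc (((m:ℕ):ℝ)/((K:ℝ)+1)) ((((m:ℕ):ℝ)+1)/((K:ℝ)+1)) with hJ
  set BadM : Fin n → Set (Fin n → Fin 1 → ℝ) :=
    fun v => {X | X v 0 ∈ (GoodR K L)ᶜ} with hBM
  set BadP : Fin n × Fin n → Fin (K+1) → Set (Fin n → Fin 1 → ℝ) :=
    fun p m => {X | X p.1 0 ∈ J m ∧ X p.2 0 ∈ J m} with hBP
  set Bad : Set (Fin n → Fin 1 → ℝ) :=
    (⋃ v, BadM v) ∪ ⋃ p ∈ Finset.univ.offDiag, ⋃ m : Fin (K+1), BadP p m with hBad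
  have hcov : (Set.univ : Set (Fin n → Fin 1 → ℝ)) ⊆ GoodX K L n ∪ Bad := by
    intro X _
    by_cases hg : X ∈ GoodX K L n
    · exact Or.inl hg
    · right
      rw [GoodX, Set.mem_setOf_eq] at hg
      by_cases hm : ∀ v, X v 0 ∈ GoodR K L
      · have hninj : ¬Function.Injective fun v => bkt K (X v 0) := fun h => hg ⟨hm, h⟩
        rw [Function.not_injective_iff] at hninj
        obtain ⟨a, b, hab, hne⟩ := hninj
        right
        have hIcc := (hm a).1
        have hIccb := (hm b).1
        refine Set.mem_biUnion (show ((a, b) : Fin n × Fin n) ∈ Finset.univ.offDiag from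
          Finset.mem_offDiag.mpr ⟨Finset.mem_univ _, Finset.mem_univ _, hne⟩) ?_
        refine Set.mem_iUnion.mpr ⟨bktF K (X a 0), ?_, ?_⟩
        · exact bkt_mem_J K (X a 0) hIcc.1 hIcc.2
        · show X b 0 ∈ J (bktF K (X a 0))
          have hval : ((bktF K (X a 0) : ℕ) : ℝ) = ((bkt K (X b 0) : ℕ) : ℝ) :=
            congrArg Nat.cast (show (bktF K (X a 0) : ℕ) = bkt K (X b 0) from hab)
          rw [hJ]
          simp only
          rw [hval]
          exact bkt_mem_J K (X b 0) hIccb.1 hIccb.2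
      · push_neg at hm
        obtain ⟨v, hv⟩ := hm
        exact Or.inl (Set.mem_iUnion.mpr ⟨v, hv⟩)
  have hBadMle : ∀ v, μ (BadM v) ≤ ENNReal.ofReal ((K:ℝ) * (2/(L:ℝ))) := by
    intro v
    rw [hBM]
    simp only
    rw [hμ, measure_single]
    exact unif01_GoodR_compl K L hL1
  have hBadPle : ∀ p : Fin n × Fin n, p ∈ Finset.univ.offDiag →
      μ (⋃ m : Fin (K+1), BadP p m) ≤ ENNReal.ofReal (1/((K:ℝ)+1)) := by
    intro p hp
    have hne : p.1 ≠ p.2 := (Finset.mem_offDiag.mp hp).2.2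
    calc μ (⋃ m : Fin (K+1), BadP p m)
        ≤ ∑ m : Fin (K+1), μ (BadP p m) := measure_iUnion_fintype_le _ _
      _ ≤ ∑ _m : Fin (K+1), ENNReal.ofReal (1/((K:ℝ)+1)) * ENNReal.ofReal (1/((K:ℝ)+1)) := by
          apply Finset.sum_le_sum
          intro m _
          rw [hBP]
          simp only
          rw [hμ, measure_pair hne]
          exact mul_le_mul' (unif01_J K _) (unif01_J K _)
      _ = (K+1) • (ENNReal.ofReal (1/((K:ℝ)+1)) * ENNReal.ofReal (1/((K:ℝ)+1))) := by
          rw [Finset.sum_const, Finset.card_univ, Fintype.card_fin]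
      _ ≤ ENNReal.ofReal (1/((K:ℝ)+1)) := by
          rw [← ENNReal.ofReal_mul (by positivity), nsmul_eq_mul,
            ← ENNReal.ofReal_natCast (K+1), ← ENNReal.ofReal_mul (by positivity)]
          apply ENNReal.ofReal_le_ofReal
          have hK1 : ((K:ℝ)+1) ≠ 0 := by positivity
          push_cast
          apply le_of_eq
          field_simp
  have hBadle : μ Bad ≤ ENNReal.ofReal ((n:ℝ) * ((K:ℝ) * (2/(L:ℝ))))
      + ENNReal.ofReal ((n:ℝ)^2 * (1/((K:ℝ)+1))) := by
    calc μ Bad ≤ μ (⋃ v, BadM v) + μ (⋃ p ∈ Finset.univ.offDiag, ⋃ m : Fin (K+1), BadP p m) :=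
          measure_union_le _ _
      _ ≤ (∑ v : Fin n, μ (BadM v)) + ∑ p ∈ Finset.univ.offDiag, μ (⋃ m : Fin (K+1), BadP p m) :=
          add_le_add (measure_iUnion_fintype_le _ _) (measure_biUnion_finset_le _ _)
      _ ≤ (∑ _v : Fin n, ENNReal.ofReal ((K:ℝ) * (2/(L:ℝ))))
          + ∑ _p ∈ Finset.univ.offDiag, ENNReal.ofReal (1/((K:ℝ)+1)) :=
          add_le_add (Finset.sum_le_sum fun v _ => hBadMle v) (Finset.sum_le_sum hBadPle)
      _ ≤ ENNReal.ofReal ((n:ℝ) * ((K:ℝ) * (2/(L:ℝ))))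
          + ENNReal.ofReal ((n:ℝ)^2 * (1/((K:ℝ)+1))) := by
          apply add_le_add
          · rw [Finset.sum_const, Finset.card_univ, Fintype.card_fin, nsmul_eq_mul,
              ← ENNReal.ofReal_natCast n, ← ENNReal.ofReal_mul (by positivity)]
          · rw [Finset.sum_const, nsmul_eq_mul]
            calc ((Finset.univ.offDiag.card : ℝ≥0∞)) * ENNReal.ofReal (1/((K:ℝ)+1))
                ≤ ((n^2 : ℕ) : ℝ≥0∞) * ENNReal.ofReal (1/((K:ℝ)+1)) := by
                  apply mul_le_mul'
                  · apply Nat.cast_le.mpr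
                    rw [Finset.offDiag_card, Finset.card_univ, Fintype.card_fin]
                    exact le_trans (Nat.sub_le _ _) (le_of_eq (pow_two n).symm)
                  · exact le_rfl
              _ = ENNReal.ofReal ((n:ℝ)^2 * (1/((K:ℝ)+1))) := by
                  rw [← ENNReal.ofReal_natCast (n^2), ← ENNReal.ofReal_mul (by positivity)]
                  push_cast
                  ring_nf
  have h1 : (1:ℝ≥0∞) ≤ μ (GoodX K L n) + μ Bad := by
    have h2 : μ Set.univ ≤ μ (GoodX K L n ∪ Bad) := measure_mono hcov
    rw [measure_univ] at h2
    exact le_trans h2 (measure_union_le _ _)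
  rw [tsub_le_iff_right]
  exact le_trans h1 (add_le_add_right hBadle _)

end MeasureSide

/-- **Uniform universal approximation by SumGNN⁺ with random node features**
(Theorem 3). If a graph invariant `ξ` satisfies a zero-one law with respect to
`G(n, 1/2)`, then for every `δ > 0` there is a SumGNN⁺ with random node features
(non-linearity the linearized sigmoid, node features `d` iid `U[0,1]` coordinates)
which uniformly `δ`-approximates `ξ`: for every `n`, the probability over
`G ~ G(n, 1/2)` and the random features that the model output agrees with `ξ(G)`
is at least `1 - δ`. -/
theorem sumGNN_uniform_approximation
    (ξ : (n : ℕ) → (Fin n → Fin n → Bool) → Bool) (hinv : IsGraphInvariant ξ)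
    (hξ : Tendsto (fun n =>
            erMeasure n (1 / 2) {e : EdgeIdx n → Bool | ξ n (adjOf e) = true})
          atTop (𝓝 (0 : ℝ≥0∞)) ∨
          Tendsto (fun n =>
            erMeasure n (1 / 2) {e : EdgeIdx n → Bool | ξ n (adjOf e) = true})
          atTop (𝓝 (1 : ℝ≥0∞)))
    (δ : ℝ) (hδ : 0 < δ) :
    ∃ (M : SumGNN) (c : (Fin (M.d M.T) → ℝ) → Bool),
      M.σ = linSigmoid ∧
      ∀ n : ℕ,
        ENNReal.ofReal (1 - δ) ≤
          graphMeasure n (1 / 2) (unifFeat (M.d 0))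
            {ω : GOmega n (M.d 0) | M.output c (adjOf ω.1) ω.2 = ξ n (adjOf ω.1)} := by
  classical
  by_cases hδ1 : 1 ≤ δ
  · refine ⟨theM 0 1 0, theC ξ false 0 0, rfl, ?_⟩
    intro n
    have h0 : ENNReal.ofReal (1 - δ) = 0 := by
      rw [ENNReal.ofReal_eq_zero]
      linarith
    rw [h0]
    exact zero_le
  push_neg at hδ1
  have hkey : ENNReal.ofReal (1 - δ) = 1 - ENNReal.ofReal δ := by
    rw [ENNReal.ofReal_sub _ hδ.le, ENNReal.ofReal_one]
  obtain ⟨bb, N, hN⟩ : ∃ (bb : Bool) (N : ℕ), ∀ n, N < n →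
      ENNReal.ofReal (1 - δ) ≤
        erMeasure n (1/2) {e : EdgeIdx n → Bool | ξ n (adjOf e) = bb} := by
    have hofδ : (0:ℝ≥0∞) < ENNReal.ofReal δ := ENNReal.ofReal_pos.mpr hδ
    rcases hξ with h0 | h1
    · refine ⟨false, ?_⟩
      obtain ⟨N, hNe⟩ := Filter.eventually_atTop.mp (h0.eventually_lt_const hofδ)
      refine ⟨N, fun n hn => ?_⟩
      have hlt := hNe n hn.le
      have hmeas : MeasurableSet {e : EdgeIdx n → Bool | ξ n (adjOf e) = true} :=
        (Set.to_countable _).measurableSet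
      have hcomp : {e : EdgeIdx n → Bool | ξ n (adjOf e) = false}
          = {e : EdgeIdx n → Bool | ξ n (adjOf e) = true}ᶜ := by
        ext e
        simp [Bool.not_eq_true]
      rw [hcomp, measure_compl hmeas (measure_ne_top _ _), measure_univ, hkey]
      exact tsub_le_tsub_left hlt.le 1
    · refine ⟨true, ?_⟩
      have hlt1 : (1 : ℝ≥0∞) - ENNReal.ofReal δ < 1 :=
        ENNReal.sub_lt_self ENNReal.one_ne_top one_ne_zero (ne_of_gt hofδ)
      obtain ⟨N, hNe⟩ := Filter.eventually_atTop.mp (h1.eventually_const_lt hlt1)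
      exact ⟨N, fun n hn => by rw [hkey]; exact (hNe n hn.le).le⟩
  set Kc := ⌈(2*(N:ℝ)^2)/δ⌉₊ with hKc
  set Lc := 1 + ⌈(4*(N:ℝ)*(Kc:ℝ))/δ⌉₊ with hLc
  have hL1 : 1 ≤ Lc := Nat.le_add_right 1 _
  refine ⟨theM Kc Lc N, theC ξ bb Kc N, rfl, ?_⟩
  intro n
  rcases Nat.lt_or_ge N n with hlarge | hsmall
  · -- large n : the invariant is almost surely constant
    have hsub : {e : EdgeIdx n → Bool | ξ n (adjOf e) = bb} ×ˢ
        (Set.univ : Set (Fin n → Fin 1 → ℝ)) ⊆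
        {ω : (EdgeIdx n → Bool) × (Fin n → Fin 1 → ℝ) |
          (theM Kc Lc N).output (theC ξ bb Kc N) (adjOf ω.1) ω.2 = ξ n (adjOf ω.1)} := by
      rintro ⟨e, X⟩ ⟨he, -⟩
      have hbe : ξ n (adjOf e) = bb := he
      show (theM Kc Lc N).output (theC ξ bb Kc N) (adjOf e) X = ξ n (adjOf e)
      rw [output_large Kc Lc N ξ bb (adjOf e) X hlarge, hbe]
    show ENNReal.ofReal (1-δ) ≤
      ((erMeasure n (1/2)).prod (Measure.pi fun _ : Fin n => unifFeat 1))
        {ω : (EdgeIdx n → Bool) × (Fin n → Fin 1 → ℝ) |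
          (theM Kc Lc N).output (theC ξ bb Kc N) (adjOf ω.1) ω.2 = ξ n (adjOf ω.1)}
    refine le_trans (hN n hlarge) (le_trans (le_of_eq ?_) (measure_mono hsub))
    rw [Measure.prod_prod, measure_univ, mul_one]
  · rcases Nat.eq_zero_or_pos n with hn0 | hn1
    · subst hn0
      have huniv : {ω : (EdgeIdx 0 → Bool) × (Fin 0 → Fin 1 → ℝ) |
          (theM Kc Lc N).output (theC ξ bb Kc N) (adjOf ω.1) ω.2 = ξ 0 (adjOf ω.1)}
          = Set.univ :=
        Set.eq_univ_of_forall (fun ω => output_n0 Kc Lc N ξ bb (adjOf ω.1) ω.2)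
      show ENNReal.ofReal (1-δ) ≤
        ((erMeasure 0 (1/2)).prod (Measure.pi fun _ : Fin 0 => unifFeat 1))
          {ω : (EdgeIdx 0 → Bool) × (Fin 0 → Fin 1 → ℝ) |
            (theM Kc Lc N).output (theC ξ bb Kc N) (adjOf ω.1) ω.2 = ξ 0 (adjOf ω.1)}
      rw [huniv, measure_univ]
      exact ENNReal.ofReal_le_one.mpr (by linarith)
    · -- small n : the network decodes the graph exactly on the good event
      have hsub : (Set.univ : Set (EdgeIdx n → Bool)) ×ˢ GoodX Kc Lc n ⊆
          {ω : (EdgeIdx n → Bool) × (Fin n → Fin 1 → ℝ) |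
            (theM Kc Lc N).output (theC ξ bb Kc N) (adjOf ω.1) ω.2 = ξ n (adjOf ω.1)} := by
        rintro ⟨e, X⟩ ⟨-, hX⟩
        exact output_small Kc Lc N ξ bb (adjOf e) X hL1 hinv hn1 hsmall
          (adjOf_symm e) (adjOf_irrefl e) hX.1 hX.2
      show ENNReal.ofReal (1-δ) ≤
        ((erMeasure n (1/2)).prod (Measure.pi fun _ : Fin n => unifFeat 1))
          {ω : (EdgeIdx n → Bool) × (Fin n → Fin 1 → ℝ) |
            (theM Kc Lc N).output (theC ξ bb Kc N) (adjOf ω.1) ω.2 = ξ n (adjOf ω.1)}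
      refine le_trans ?_ (measure_mono hsub)
      rw [Measure.prod_prod, measure_univ, one_mul]
      refine le_trans ?_ (goodX_measure Kc Lc hL1)
      -- numerical bound
      have hδ2 : (0:ℝ) < δ := hδ
      have hLpos : (0:ℝ) < (Lc:ℝ) := by exact_mod_cast hL1
      have hKpos : (0:ℝ) < (Kc:ℝ) + 1 := by positivity
      have hnN' : (n:ℝ) ≤ (N:ℝ) := by exact_mod_cast hsmall
      have hn0' : (0:ℝ) ≤ (n:ℝ) := Nat.cast_nonneg n
      have hK : 2*(N:ℝ)^2 ≤ δ * (Kc:ℝ) := by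
        have h1 : (2*(N:ℝ)^2)/δ ≤ (Kc:ℝ) := by
          rw [hKc]
          exact Nat.le_ceil _
        rw [div_le_iff₀ hδ2] at h1
        linarith
      have hLge : 4*(N:ℝ)*(Kc:ℝ) ≤ δ * (Lc:ℝ) := by
        have h1 : (4*(N:ℝ)*(Kc:ℝ))/δ ≤ (⌈(4*(N:ℝ)*(Kc:ℝ))/δ⌉₊ : ℝ) := Nat.le_ceil _
        have h2 : ((⌈(4*(N:ℝ)*(Kc:ℝ))/δ⌉₊ : ℕ) : ℝ) ≤ (Lc:ℝ) := by
          rw [hLc]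
          push_cast
          linarith
        rw [div_le_iff₀ hδ2] at h1
        nlinarith
      have hKc0 : (0:ℝ) ≤ (Kc:ℝ) := Nat.cast_nonneg _
      have ha : (n:ℝ) * ((Kc:ℝ) * (2/(Lc:ℝ))) ≤ δ/2 := by
        have heq : (n:ℝ) * ((Kc:ℝ) * (2/(Lc:ℝ))) = (2*(n:ℝ)*(Kc:ℝ))/(Lc:ℝ) := by
          ring
        rw [heq, div_le_iff₀ hLpos]
        have h3 : 2*(n:ℝ)*(Kc:ℝ) ≤ 2*(N:ℝ)*(Kc:ℝ) := by nlinarith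
        nlinarith
      have hb : (n:ℝ)^2 * (1/((Kc:ℝ)+1)) ≤ δ/2 := by
        have heq : (n:ℝ)^2 * (1/((Kc:ℝ)+1)) = (n:ℝ)^2/((Kc:ℝ)+1) := by ring
        rw [heq, div_le_iff₀ hKpos]
        have h3 : (n:ℝ)^2 ≤ (N:ℝ)^2 := by nlinarith
        nlinarith
      calc ENNReal.ofReal (1-δ) = 1 - ENNReal.ofReal δ := hkey
        _ ≤ 1 - (ENNReal.ofReal ((n:ℝ) * ((Kc:ℝ) * (2/(Lc:ℝ))))
              + ENNReal.ofReal ((n:ℝ)^2 * (1/((Kc:ℝ)+1)))) := by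
            apply tsub_le_tsub_left
            rw [← ENNReal.ofReal_add (by positivity) (by positivity)]
            apply ENNReal.ofReal_le_ofReal
            linarith
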